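/- (Shi) Let W_a be the affine Weyl group of an irreducible root system Φ acting on V = Q∨ ⊗ ℝ, and for w ∈ W_a and α ∈ Φ⁺ let k(α, w) be the integer with k(α, w) < ⟨α, v⟩ < k(α, w)+1 for v in the alcove w(A). Given integers k_α for each α ∈ Φ⁺, there exists w ∈ W_a with k(α, w) = k_α for all α if and only if k_α + k_β ≤ k_{α+β} ≤ k_α + k_β + 1 whenever α, β, α+β ∈ Φ⁺. -/

import Mathlib

open RealInnerProductSpace
open scoped Classical

variable {V : Type*} [NormedAddCommGroup V] [InnerProductSpace ℝ V] [FiniteDimensional ℝ V]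

/-- A finite crystallographic root system in the real inner product space `V`. -/
structure IsRootSystem (Φ : Set V) : Prop where
  finite : Φ.Finite
  nonzero : (0 : V) ∉ Φ
  spanning : Submodule.span ℝ Φ = ⊤
  reflect_mem : ∀ α ∈ Φ, ∀ β ∈ Φ, β - (2 * ⟪β, α⟫ / ⟪α, α⟫) • α ∈ Φ
  crystallographic : ∀ α ∈ Φ, ∀ β ∈ Φ, ∃ n : ℤ, 2 * ⟪β, α⟫ / ⟪α, α⟫ = (n : ℝ)

/-- `Pos` is a system of positive roots for `Φ`: the roots on the positive side of a
generic linear functional. -/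
def IsPositiveSystem (Φ Pos : Set V) : Prop :=
  ∃ f : V →ₗ[ℝ] ℝ, (∀ α ∈ Φ, f α ≠ 0) ∧ Pos = {α ∈ Φ | 0 < f α}

/-- Irreducibility of a root system: no splitting into two nonempty orthogonal parts. -/
def IsIrreducibleRootSystem (Φ : Set V) : Prop :=
  Φ.Nonempty ∧ ∀ Φ₁ Φ₂ : Set V, Φ = Φ₁ ∪ Φ₂ →
    (∀ α ∈ Φ₁, ∀ β ∈ Φ₂, ⟪α, β⟫ = 0) → Φ₁ = ∅ ∨ Φ₂ = ∅

/-- A simple root: a positive root that is not the sum of two positive roots. -/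
def IsSimpleRoot (Pos : Set V) (α : V) : Prop :=
  α ∈ Pos ∧ ∀ β ∈ Pos, ∀ γ ∈ Pos, α ≠ β + γ

/-- An upper order ideal of the positive roots. -/
def IsUpperIdeal (Pos I : Set V) : Prop :=
  I ⊆ Pos ∧ ∀ α ∈ I, ∀ β ∈ Pos, α + β ∈ Pos → α + β ∈ I

/-- `γ` is a sum of `k` elements of `S`. -/
def IsSumOf (S : Set V) (k : ℕ) (γ : V) : Prop :=
  ∃ f : Fin k → V, (∀ i, f i ∈ S) ∧ ∑ i, f i = γ

/-- The standard partial order on roots: `α ≼ γ` iff `γ - α` is a (possibly empty)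
sum of positive roots. -/
def RootLE (Pos : Set V) (α γ : V) : Prop := ∃ k, IsSumOf Pos k (γ - α)

/-- The set of minimal roots of an ideal `I`. -/
def minimalRoots (Pos I : Set V) : Set V :=
  {α | α ∈ I ∧ ∀ β ∈ I, RootLE Pos β α → β = α}

/-- `γ_{I,+}`: the maximal number of summands in a decomposition of `γ` as a sum of
elements of `I` (with junk value `0` if no decomposition exists). -/
noncomputable def aPlus (I : Set V) (γ : V) : ℕ := sSup {k | IsSumOf I k γ}

/-- `γ_{I,-}`: the minimal `k` such that `γ` is a sum of `k + 1` elements of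
`Pos \ I`. -/
noncomputable def aMinus (Pos I : Set V) (γ : V) : ℕ := sInf {k | IsSumOf (Pos \ I) (k + 1) γ}

/-- The height of a positive root: the number of summands when written as a sum of
simple roots. -/
noncomputable def rootHeight (Pos : Set V) (γ : V) : ℕ :=
  sSup {k | IsSumOf {α | IsSimpleRoot Pos α} k γ}

/-- The reflection in the hyperplane orthogonal to `α`. -/
noncomputable def rootReflection (α : V) : V ≃ₗᵢ[ℝ] V :=
  Submodule.reflection ((ℝ ∙ α)ᗮ)

/-- The Weyl group: the subgroup of linear isometries generated by root reflections. -/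
noncomputable def WeylGroup (Φ : Set V) : Subgroup (V ≃ₗᵢ[ℝ] V) :=
  Subgroup.closure {g | ∃ α ∈ Φ, g = rootReflection α}

/-- The coroot `α∨ = 2α/⟨α,α⟩` of a root `α`. -/
noncomputable def coroot (α : V) : V := (2 / ⟪α, α⟫) • α

/-- The coroot lattice `Q∨`. -/
noncomputable def corootLattice (Φ : Set V) : AddSubgroup V :=
  AddSubgroup.closure {v | ∃ α ∈ Φ, v = coroot α}

/-- A root reflection viewed as an affine transformation. -/
noncomputable def rootReflectionAff (α : V) : V ≃ᵃ[ℝ] V :=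
  (rootReflection α).toLinearEquiv.toAffineEquiv

/-- The affine Weyl group `W_a ≅ W ⋉ Q∨`: generated by the root reflections together
with the translations by elements of the coroot lattice. -/
noncomputable def affineWeylGroup (Φ : Set V) : Subgroup (V ≃ᵃ[ℝ] V) :=
  Subgroup.closure
    ({g | ∃ α ∈ Φ, g = rootReflectionAff α} ∪
     {g | ∃ lam ∈ corootLattice Φ, g = AffineEquiv.constVAdd ℝ V lam})

/-- The fundamental alcove `A` (with respect to the highest root `θ`). -/
def fundamentalAlcove (Pos : Set V) (θ : V) : Set V :=
  {v | (∀ α, IsSimpleRoot Pos α → 0 < ⟪α, v⟫) ∧ ⟪θ, v⟫ < 1}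

/-- `kk α = k(α, w)` for every positive root `α`: the alcove `w(A)` lies strictly
between the hyperplanes `H_{α, kk α}` and `H_{α, kk α + 1}`. -/
def IsAlcoveK (Pos : Set V) (θ : V) (w : V ≃ᵃ[ℝ] V) (kk : V → ℤ) : Prop :=
  ∀ α ∈ Pos, ∀ v ∈ fundamentalAlcove Pos θ,
    (kk α : ℝ) < ⟪α, w v⟫ ∧ ⟪α, w v⟫ < kk α + 1

/-- `supp w = I` for an ideal `I ⊆ Φ⁺`: `w` is dominant (no negative root occurs in
the support, i.e. `k(α, w) ≥ 0` for all positive `α`) and a positive root `α` lies in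
the support (i.e. `k(α, w) ≥ 1`) exactly when `α ∈ I`. -/
def SuppIs (Pos : Set V) (θ : V) (w : V ≃ᵃ[ℝ] V) (I : Set V) : Prop :=
  ∃ kk : V → ℤ, IsAlcoveK Pos θ w kk ∧ ∀ α ∈ Pos, 0 ≤ kk α ∧ (α ∈ I ↔ 1 ≤ kk α)

/-- The sign type `ST(I)`: the set of elements of the affine Weyl group whose support
is `I`. -/
noncomputable def signType (Φ Pos : Set V) (θ : V) (I : Set V) : Set (V ≃ᵃ[ℝ] V) :=
  {w | w ∈ affineWeylGroup Φ ∧ SuppIs Pos θ w I}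

/-- The length of `w ∈ W_a`, computed as `∑_{α ∈ Φ⁺} |k(α, w)|`. -/
noncomputable def affLen (Pos : Set V) (θ : V) (w : V ≃ᵃ[ℝ] V) : ℕ :=
  if h : ∃ kk : V → ℤ, IsAlcoveK Pos θ w kk then
    ∑ᶠ α ∈ Pos, (h.choose α).natAbs
  else 0

/-- The simple affine reflections `S = {s₀, s₁, …, s_n}` of `W_a`: the reflections in
the simple roots together with the affine reflection `s₀ = s_θ τ_{-θ∨}` in `H_{θ,1}`. -/
noncomputable def simpleAffineReflections (Pos : Set V) (θ : V) : Set (V ≃ᵃ[ℝ] V) :=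
  {s | (∃ α, IsSimpleRoot Pos α ∧ s = rootReflectionAff α) ∨
    s = (rootReflectionAff θ).trans (AffineEquiv.constVAdd ℝ V (coroot θ))}

/-- The translation part `λ` of `w = x τ_λ` (so that `w v = x (v + λ)`). -/
noncomputable def translationPart (w : V ≃ᵃ[ℝ] V) : V := w.linear.symm (w 0)

set_option linter.unusedSectionVars false
set_option linter.unusedVariables false
set_option linter.unusedTactic false

section ShiAuxSec
namespace ShiAux

/-- explicit reflection formula -/
noncomputable def reflD (ρ β : V) : V := β - (2 * ⟪β, ρ⟫ / ⟪ρ, ρ⟫) • ρ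

lemma inner_self_pos' {x : V} (h : x ≠ 0) : 0 < ⟪x, x⟫ :=
  lt_of_le_of_ne real_inner_self_nonneg (fun e => h (inner_self_eq_zero.mp e.symm))

lemma reflD_add (ρ β γ : V) : reflD ρ (β + γ) = reflD ρ β + reflD ρ γ := by
  simp only [reflD, inner_add_left]
  have h : 2 * (⟪β, ρ⟫ + ⟪γ, ρ⟫) / ⟪ρ, ρ⟫ = 2 * ⟪β, ρ⟫ / ⟪ρ, ρ⟫ + 2 * ⟪γ, ρ⟫ / ⟪ρ, ρ⟫ := by ring
  rw [h, add_smul]; abel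

lemma reflD_neg (ρ β : V) : reflD ρ (-β) = - reflD ρ β := by
  simp only [reflD, inner_neg_left]
  have h : 2 * (-⟪β, ρ⟫) / ⟪ρ, ρ⟫ = -(2 * ⟪β, ρ⟫ / ⟪ρ, ρ⟫) := by ring
  rw [h, neg_smul]; abel

lemma inner_reflD (ρ x y : V) : ⟪reflD ρ x, y⟫ = ⟪x, reflD ρ y⟫ := by
  simp only [reflD, inner_sub_left, inner_sub_right, real_inner_smul_left, real_inner_smul_right]
  rw [real_inner_comm ρ y]
  ring

lemma reflD_reflD {ρ : V} (hρ : ρ ≠ 0) (β : V) : reflD ρ (reflD ρ β) = β := by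
  have h : ⟪ρ, ρ⟫ ≠ 0 := ne_of_gt (inner_self_pos' hρ)
  simp only [reflD, inner_sub_left, real_inner_smul_left]
  have h2 : 2 * (⟪β, ρ⟫ - 2 * ⟪β, ρ⟫ / ⟪ρ, ρ⟫ * ⟪ρ, ρ⟫) / ⟪ρ, ρ⟫ = -(2 * ⟪β, ρ⟫ / ⟪ρ, ρ⟫) := by
    field_simp
    ring
  rw [h2, neg_smul, sub_neg_eq_add, sub_add_cancel]

lemma reflD_self {ρ : V} (hρ : ρ ≠ 0) : reflD ρ ρ = -ρ := by
  have h : ⟪ρ, ρ⟫ ≠ 0 := ne_of_gt (inner_self_pos' hρ)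
  simp only [reflD]
  rw [mul_div_assoc, div_self h, mul_one, two_smul]
  abel

lemma reflD_two_self {ρ : V} (hρ : ρ ≠ 0) : reflD ρ ((2:ℝ) • ρ) = -((2:ℝ) • ρ) := by
  have h : ⟪ρ, ρ⟫ ≠ 0 := ne_of_gt (inner_self_pos' hρ)
  simp only [reflD, real_inner_smul_left]
  have h2 : 2 * (2 * ⟪ρ, ρ⟫) / ⟪ρ, ρ⟫ = 4 := by field_simp; ring
  rw [h2, show ((4:ℝ) • ρ) = (2:ℝ)•ρ + (2:ℝ)•ρ by rw [← add_smul]; norm_num]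
  abel

lemma reflD_zero (ρ : V) : reflD ρ (0:V) = 0 := by
  simp [reflD]

end ShiAux


section part2
variable {V : Type*} [NormedAddCommGroup V] [InnerProductSpace ℝ V] [FiniteDimensional ℝ V]

namespace ShiAux

structure Ctx (Φ Pos : Set V) (f : V →ₗ[ℝ] ℝ) (θ : V) : Prop where
  hΦ : IsRootSystem Φ
  hf : ∀ α ∈ Φ, f α ≠ 0
  hPosEq : Pos = {α ∈ Φ | 0 < f α}
  hθPos : θ ∈ Pos
  hθMax : ∀ α ∈ Φ, RootLE Pos α θ

namespace Ctx

variable {Φ Pos : Set V} {f : V →ₗ[ℝ] ℝ} {θ : V} (C : Ctx Φ Pos f θ)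
include C

lemma posSub : Pos ⊆ Φ := by
  rw [C.hPosEq]; intro x hx; exact hx.1

lemma fpos {α : V} (h : α ∈ Pos) : 0 < f α := by
  rw [C.hPosEq] at h; exact h.2

lemma memPos {α : V} (h : α ∈ Φ) (h2 : 0 < f α) : α ∈ Pos := by
  rw [C.hPosEq]; exact ⟨h, h2⟩

lemma ne_zero {α : V} (h : α ∈ Φ) : α ≠ 0 := fun e => C.hΦ.nonzero (e ▸ h)

lemma ne_zero' {α : V} (h : α ∈ Pos) : α ≠ 0 := C.ne_zero (C.posSub h)

lemma ipos {α : V} (h : α ∈ Φ) : 0 < ⟪α, α⟫ := inner_self_pos' (C.ne_zero h)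

lemma reflD_mem {α β : V} (hα : α ∈ Φ) (hβ : β ∈ Φ) : reflD α β ∈ Φ :=
  C.hΦ.reflect_mem α hα β hβ

lemma neg_mem {α : V} (h : α ∈ Φ) : -α ∈ Φ := by
  have := C.reflD_mem h h
  rwa [reflD_self (C.ne_zero h)] at this

lemma posOrNeg {α : V} (h : α ∈ Φ) : α ∈ Pos ∨ -α ∈ Pos := by
  rcases lt_or_gt_of_ne (C.hf α h) with hlt | hgt
  · right
    exact C.memPos (C.neg_mem h) (by rw [map_neg]; linarith)
  · left; exact C.memPos h hgt

lemma neg_not_pos {α : V} (h : α ∈ Pos) : -α ∉ Pos := by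
  intro h2
  have h1 := C.fpos h
  have h3 := C.fpos h2
  rw [map_neg] at h3
  linarith

lemma pos_of_neg_not_pos {α : V} (h : α ∈ Φ) (h2 : -α ∉ Pos) : α ∈ Pos :=
  (C.posOrNeg h).resolve_right h2

lemma f_sumOf_nonneg {k : ℕ} {γ : V} (h : IsSumOf Pos k γ) : 0 ≤ f γ := by
  obtain ⟨g, hg, hsum⟩ := h
  rw [← hsum, map_sum]
  exact Finset.sum_nonneg fun i _ => le_of_lt (C.fpos (hg i))

lemma rootLE_f {α γ : V} (h : RootLE Pos α γ) : f α ≤ f γ := by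
  obtain ⟨k, hk⟩ := h
  have := C.f_sumOf_nonneg hk
  rw [map_sub] at this
  linarith

lemma rootLE_f_strict {α γ : V} (h : RootLE Pos α γ) (hne : α ≠ γ) : f α < f γ := by
  obtain ⟨k, g, hg, hsum⟩ := h
  rcases Nat.eq_zero_or_pos k with rfl | hp
  · exfalso
    apply hne
    have : (0:V) = γ - α := by rw [← hsum]; simp
    have := this.symm
    rw [sub_eq_zero] at this
    exact this.symm
  · have h1 : 0 < f (γ - α) := by
      rw [show γ - α = ∑ i, g i from hsum.symm, map_sum]
      have : Nonempty (Fin k) := Fin.pos_iff_nonempty.mp hp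
      exact Finset.sum_pos (fun i _ => C.fpos (hg i)) Finset.univ_nonempty
    rw [map_sub] at h1
    linarith

lemma f_lt_theta {α : V} (h : α ∈ Pos) (hne : α ≠ θ) : f α < f θ :=
  C.rootLE_f_strict (C.hθMax α (C.posSub h)) hne

/-- key: roots with negative inner product add to a root -/
lemma add_mem {α β : V} (hα : α ∈ Φ) (hβ : β ∈ Φ) (hin : ⟪α, β⟫ < 0) (hne : α + β ≠ 0) :
    α + β ∈ Φ := by
  obtain ⟨m, hm⟩ := C.hΦ.crystallographic β hβ α hα
  obtain ⟨n, hn⟩ := C.hΦ.crystallographic α hα β hβ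
  have hαα := C.ipos hα
  have hββ := C.ipos hβ
  have hm' : 2 * ⟪α, β⟫ = (m:ℝ) * ⟪β, β⟫ := by
    rw [← hm]; field_simp
  have hn' : 2 * ⟪β, α⟫ = (n:ℝ) * ⟪α, α⟫ := by
    rw [← hn]; field_simp
  have hba : ⟪β, α⟫ = ⟪α, β⟫ := real_inner_comm α β ▸ rfl
  have hmneg : m ≤ -1 := by
    have h1 : (m:ℝ) < 0 := by nlinarith
    have h2 : m < 0 := by exact_mod_cast h1
    omega
  have hnneg : n ≤ -1 := by
    have h1 : (n:ℝ) < 0 := by nlinarith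
    have h2 : n < 0 := by exact_mod_cast h1
    omega
  by_cases hm1 : m = -1
  · have := C.hΦ.reflect_mem β hβ α hα
    rw [hm, hm1] at this
    simpa using this
  by_cases hn1 : n = -1
  · have := C.hΦ.reflect_mem α hα β hβ
    rw [hn, hn1] at this
    rw [add_comm]
    simpa using this
  · exfalso
    have hm2 : m ≤ -2 := by omega
    have hn2 : n ≤ -2 := by omega
    have hcs := real_inner_mul_inner_self_le α β
    have e1 : (m:ℝ) * ⟪β,β⟫ * ((n:ℝ) * ⟪α,α⟫) = 4 * (⟪α,β⟫ * ⟪α,β⟫) := by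
      rw [← hm', ← hn', hba]; ring
    have hmn : ((m * n : ℤ):ℝ) ≤ 4 := by
      push_cast
      nlinarith [mul_pos hαα hββ, hcs, e1]
    have hmn' : m * n ≤ (4:ℤ) := by exact_mod_cast hmn
    have hm3 : -2 ≤ m := by
      by_contra hcon
      push_neg at hcon
      have h6 : (3:ℤ) * 2 ≤ (-m) * (-n) := mul_le_mul (by omega) (by omega) (by omega) (by omega)
      rw [neg_mul_neg] at h6
      omega
    have hm2' : m = -2 := by omega
    subst hm2'
    have hn2' : n = -2 := by
      have h7 : (-2:ℤ) * n ≤ 4 := hmn'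
      have h8 : -2 ≤ n := by linarith [mul_le_mul_of_nonneg_left (le_refl n) (by norm_num : (0:ℤ) ≤ 2)]
      omega
    subst hn2'
    have hz : ⟪α + β, α + β⟫ = 0 := by
      rw [real_inner_add_add_self]
      push_cast at hm' hn'
      nlinarith
    exact hne (inner_self_eq_zero.mp hz)

end Ctx
end ShiAux
end part2


section part3
variable {V : Type*} [NormedAddCommGroup V] [InnerProductSpace ℝ V] [FiniteDimensional ℝ V]

namespace ShiAux
namespace Ctx

variable {Φ Pos : Set V} {f : V →ₗ[ℝ] ℝ} {θ : V} (C : Ctx Φ Pos f θ)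
include C

lemma inner_theta_nonneg {β : V} (hβ : β ∈ Pos) : 0 ≤ ⟪β, θ⟫ := by
  by_contra h
  push_neg at h
  have hθΦ := C.posSub C.hθPos
  have hfβ := C.fpos hβ
  have hfθ := C.fpos C.hθPos
  have hne : β + θ ≠ 0 := by
    intro e
    have h1 : 0 < f (β + θ) := by rw [map_add]; linarith
    rw [e, map_zero] at h1
    exact lt_irrefl _ h1
  have hmem := C.add_mem (C.posSub hβ) hθΦ h hne
  have h2 := C.rootLE_f (C.hθMax _ hmem)
  rw [map_add] at h2
  linarith

lemma theta_coeff {α : V} (hα : α ∈ Pos) (hne : α ≠ θ) :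
    ∃ c : ℤ, 2 * ⟪α, θ⟫ / ⟪θ, θ⟫ = (c:ℝ) ∧ (c = 0 ∨ c = 1) := by
  have hθΦ := C.posSub C.hθPos
  have hαΦ := C.posSub hα
  obtain ⟨c, hc⟩ := C.hΦ.crystallographic θ hθΦ α hαΦ
  refine ⟨c, hc, ?_⟩
  have h0 : (0:ℝ) ≤ (c:ℝ) := by
    rw [← hc]
    exact div_nonneg (by linarith [C.inner_theta_nonneg hα]) (le_of_lt (C.ipos hθΦ))
  have h0' : 0 ≤ c := by exact_mod_cast h0
  by_contra hcon
  push_neg at hcon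
  have hc2 : 2 ≤ c := by omega
  have hc2' : (2:ℝ) ≤ (c:ℝ) := by exact_mod_cast hc2
  have hrefl := C.hΦ.reflect_mem θ hθΦ α hαΦ
  rw [hc] at hrefl
  have hflt := C.f_lt_theta hα hne
  have hfθ := C.fpos C.hθPos
  have hfα := C.fpos hα
  have hfneg : f (α - (c:ℝ) • θ) < 0 := by
    rw [map_sub, map_smul]
    simp only [smul_eq_mul]
    nlinarith
  have hpos2 : (c:ℝ) • θ - α ∈ Pos := by
    rcases C.posOrNeg hrefl with h1 | h1
    · exact absurd (C.fpos h1) (by linarith)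
    · rwa [neg_sub] at h1
  have h3 := C.rootLE_f (C.hθMax _ (C.posSub hpos2))
  rw [map_sub, map_smul] at h3
  simp only [smul_eq_mul] at h3
  nlinarith

lemma theta_sub {α : V} (hα : α ∈ Pos) (hne : α ≠ θ) (hc1 : 2 * ⟪α, θ⟫ / ⟪θ, θ⟫ = 1) :
    θ - α ∈ Pos := by
  have hθΦ := C.posSub C.hθPos
  have hαΦ := C.posSub hα
  have hrefl := C.hΦ.reflect_mem θ hθΦ α hαΦ
  rw [hc1, one_smul] at hrefl
  have hfneg : f (α - θ) < 0 := by
    rw [map_sub]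
    linarith [C.f_lt_theta hα hne]
  rcases C.posOrNeg hrefl with h1 | h1
  · exact absurd (C.fpos h1) (by linarith)
  · rwa [neg_sub] at h1

lemma chain {α : V} (hα : α ∈ Pos) (hne : α ≠ θ) : ∃ β, β ∈ Pos ∧ α + β ∈ Pos := by
  have hθΦ := C.posSub C.hθPos
  have hαΦ := C.posSub hα
  obtain ⟨k, g, hg, hsum⟩ := C.hθMax α hαΦ
  by_cases hex : ∃ j, ⟪g j, α⟫ < 0
  · obtain ⟨j, hj⟩ := hex
    have hβ := hg j
    have hin : ⟪α, g j⟫ < 0 := by rwa [real_inner_comm] at hj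
    have hne0 : α + g j ≠ 0 := by
      intro e
      have h1 : 0 < f (α + g j) := by rw [map_add]; linarith [C.fpos hα, C.fpos hβ]
      rw [e, map_zero] at h1
      exact lt_irrefl _ h1
    have hmem := C.add_mem hαΦ (C.posSub hβ) hin hne0
    exact ⟨g j, hβ, C.memPos hmem (by rw [map_add]; linarith [C.fpos hα, C.fpos hβ])⟩
  · push_neg at hex
    have hθeq : θ = α + ∑ i, g i := by rw [hsum]; abel
    have hθα : 0 < ⟪θ, α⟫ := by
      rw [hθeq, inner_add_left, sum_inner]
      have h1 : 0 ≤ ∑ i, ⟪g i, α⟫ := Finset.sum_nonneg fun i _ => hex i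
      linarith [C.ipos hαΦ]
    have hin : ⟪α, -θ⟫ < 0 := by
      rw [inner_neg_right, real_inner_comm]
      linarith
    have hne0 : α + -θ ≠ 0 := by
      intro e
      apply hne
      rw [← sub_eq_zero, sub_eq_add_neg]
      exact e
    have hmem := C.add_mem hαΦ (C.neg_mem hθΦ) hin hne0
    have hmem' : θ - α ∈ Φ := by
      have := C.neg_mem hmem
      rwa [show -(α + -θ) = θ - α by abel] at this
    have hfpos : 0 < f (θ - α) := by
      rw [map_sub]
      linarith [C.f_lt_theta hα hne]
    refine ⟨θ - α, C.memPos hmem' hfpos, ?_⟩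
    rw [show α + (θ - α) = θ by abel]
    exact C.hθPos

lemma k_smul_le_two {ρ : V} (hρ : ρ ∈ Φ) {k : ℤ} (hk : 1 ≤ k) (h : ((k:ℝ)) • ρ ∈ Φ) :
    k ≤ 2 := by
  obtain ⟨n, hn⟩ := C.hΦ.crystallographic ((k:ℝ) • ρ) h ρ hρ
  have hρ2 := C.ipos hρ
  have hkpos : (0:ℝ) < (k:ℝ) := by exact_mod_cast lt_of_lt_of_le zero_lt_one hk
  simp only [real_inner_smul_left, real_inner_smul_right] at hn
  have hden : (k:ℝ) * ((k:ℝ) * ⟪ρ,ρ⟫) ≠ 0 :=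
    mul_ne_zero (ne_of_gt hkpos) (mul_ne_zero (ne_of_gt hkpos) (ne_of_gt hρ2))
  rw [div_eq_iff hden] at hn
  have hn' : (2:ℝ) = (n:ℝ) * k := by
    have hne2 : (k:ℝ) * ⟪ρ,ρ⟫ ≠ 0 := mul_ne_zero (ne_of_gt hkpos) (ne_of_gt hρ2)
    apply mul_right_cancel₀ hne2
    linear_combination hn
  have hn2 : (2:ℤ) = n * k := by exact_mod_cast hn'
  have hdvd : k ∣ 2 := ⟨n, hn2.trans (mul_comm n k)⟩
  exact Int.le_of_dvd (by norm_num) hdvd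

lemma step_lemma {ρ β : V} (hρs : IsSimpleRoot Pos ρ) (hβ : β ∈ Pos) (hip : 0 < ⟪β, ρ⟫) :
    β = ρ ∨ β - ρ ∈ Pos := by
  have hρΦ := C.posSub hρs.1
  have hβΦ := C.posSub hβ
  obtain ⟨d, hd⟩ := C.hΦ.crystallographic β hβΦ ρ hρΦ
  obtain ⟨e, he⟩ := C.hΦ.crystallographic ρ hρΦ β hβΦ
  have hββ := C.ipos hβΦ
  have hρρ := C.ipos hρΦ
  have hbr : ⟪ρ, β⟫ = ⟪β, ρ⟫ := real_inner_comm β ρ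
  have hd1 : 1 ≤ d := by
    have h1 : (0:ℝ) < (d:ℝ) := by
      rw [← hd]
      exact div_pos (by linarith) hββ
    have h2 : 0 < d := by exact_mod_cast h1
    omega
  have he1 : 1 ≤ e := by
    have h1 : (0:ℝ) < (e:ℝ) := by
      rw [← he]
      exact div_pos (by linarith) hρρ
    have h2 : 0 < e := by exact_mod_cast h1
    omega
  by_cases hβρ : β = ρ
  · exact Or.inl hβρ
  have hd' : 2 * ⟪ρ, β⟫ = (d:ℝ) * ⟪β, β⟫ := by
    rw [← hd]; field_simp
  have he' : 2 * ⟪β, ρ⟫ = (e:ℝ) * ⟪ρ, ρ⟫ := by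
    rw [← he]; field_simp
  by_cases hdone : d = 1
  · have hrefl := C.hΦ.reflect_mem β hβΦ ρ hρΦ
    rw [hd, hdone] at hrefl
    push_cast at hrefl
    rw [one_smul] at hrefl
    rcases C.posOrNeg hrefl with h1 | h1
    · exact absurd (show ρ = β + (ρ - β) by abel) (hρs.2 β hβ (ρ - β) h1)
    · right; rwa [neg_sub] at h1
  by_cases hetwo : e = 1
  · have hrefl := C.hΦ.reflect_mem ρ hρΦ β hβΦ
    rw [he, hetwo] at hrefl
    push_cast at hrefl
    rw [one_smul] at hrefl
    rcases C.posOrNeg hrefl with h1 | h1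
    · exact Or.inr h1
    · rw [neg_sub] at h1
      exact absurd (show ρ = β + (ρ - β) by abel) (hρs.2 β hβ (ρ - β) h1)
  · exfalso
    have hd2 : 2 ≤ d := by omega
    have he2 : 2 ≤ e := by omega
    have hcs := real_inner_mul_inner_self_le β ρ
    have e1 : (d:ℝ) * ⟪β,β⟫ * ((e:ℝ) * ⟪ρ,ρ⟫) = 4 * (⟪β,ρ⟫ * ⟪β,ρ⟫) := by
      rw [← hd', ← he', hbr]; ring
    have hde : ((d * e : ℤ):ℝ) ≤ 4 := by
      push_cast
      nlinarith [mul_pos hββ hρρ, hcs, e1]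
    have hde' : d * e ≤ (4:ℤ) := by exact_mod_cast hde
    have hd2' : d = 2 := by
      by_contra hcon
      have h6 : (3:ℤ) * 2 ≤ d * e := mul_le_mul (by omega) (by omega) (by omega) (by omega)
      omega
    have he2' : e = 2 := by
      by_contra hcon
      have h6 : (2:ℤ) * 3 ≤ d * e := mul_le_mul (by omega) (by omega) (by omega) (by omega)
      omega
    rw [hd2'] at hd'
    rw [he2'] at he'
    push_cast at hd' he'
    apply hβρ
    rw [← sub_eq_zero]
    have hz : ⟪β - ρ, β - ρ⟫ = 0 := by
      rw [real_inner_sub_sub_self]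
      nlinarith
    exact inner_self_eq_zero.mp hz

lemma pair_lemma {ρ : V} (hρs : IsSimpleRoot Pos ρ) :
    ∀ n : ℕ, ∀ β γ : V, β ∈ Pos → γ ∈ Pos → β + γ = (n:ℝ) • ρ →
      (β = ρ ∨ β = (2:ℝ) • ρ ∨ γ = ρ ∨ γ = (2:ℝ) • ρ) := by
  have hρΦ := C.posSub hρs.1
  have hρρ := C.ipos hρΦ
  intro n
  induction n using Nat.strong_induction_on with
  | _ n ih =>
    intro β γ hβ hγ hsum
    have hfβ := C.fpos hβ
    have hfγ := C.fpos hγ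
    have three_imp : ∀ x : V, x ∈ Pos → x - ρ = (2:ℝ) • ρ → False := by
      intro x hx hx2
      have hx3 : x = ((3:ℤ):ℝ) • ρ := by
        have h3 := sub_eq_iff_eq_add.mp hx2
        rw [h3]
        push_cast
        rw [show (3:ℝ) = 2 + 1 by norm_num, add_smul, one_smul]
      have hmem : ((3:ℤ):ℝ) • ρ ∈ Φ := hx3 ▸ C.posSub hx
      have := C.k_smul_le_two hρΦ (by norm_num) hmem
      omega
    match n, hsum with
    | 0, hsum =>
      exfalso
      have h1 : 0 < f (β + γ) := by rw [map_add]; linarith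
      rw [hsum] at h1
      simp at h1
    | 1, hsum =>
      exfalso
      refine hρs.2 β hβ γ hγ ?_
      rw [hsum]
      simp
    | (m+2), hsum =>
      have hsum_inner : ⟪β, ρ⟫ + ⟪γ, ρ⟫ = ((m:ℝ)+2) * ⟪ρ, ρ⟫ := by
        rw [← inner_add_left, hsum, real_inner_smul_left]
        push_cast
        ring
      by_cases hb : 0 < ⟪β, ρ⟫
      · rcases C.step_lemma hρs hβ hb with h1 | h1
        · exact Or.inl h1
        · have hsum' : (β - ρ) + γ = ((m+1:ℕ):ℝ) • ρ := by
            have h9 : ((m+1:ℕ):ℝ) • ρ = ((m+2:ℕ):ℝ) • ρ - ρ := by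
              push_cast
              rw [show ((m:ℝ)+1) = ((m:ℝ)+2) - 1 by ring, sub_smul, one_smul]
            rw [h9, ← hsum]
            abel
          rcases ih (m+1) (by omega) (β - ρ) γ h1 hγ hsum' with h2 | h2 | h2 | h2
          · right; left
            rw [sub_eq_iff_eq_add.mp h2, two_smul]
          · exact absurd h2 (fun h => three_imp β hβ h)
          · right; right; left; exact h2
          · right; right; right; exact h2
      · push_neg at hb
        have hγρ : 0 < ⟪γ, ρ⟫ := by
          have hm0 : (0:ℝ) ≤ (m:ℝ) := Nat.cast_nonneg m
          nlinarith
        rcases C.step_lemma hρs hγ hγρ with h1 | h1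
        · right; right; left; exact h1
        · have hsum' : β + (γ - ρ) = ((m+1:ℕ):ℝ) • ρ := by
            have h9 : ((m+1:ℕ):ℝ) • ρ = ((m+2:ℕ):ℝ) • ρ - ρ := by
              push_cast
              rw [show ((m:ℝ)+1) = ((m:ℝ)+2) - 1 by ring, sub_smul, one_smul]
            rw [h9, ← hsum]
            abel
          rcases ih (m+1) (by omega) β (γ - ρ) hβ h1 hsum' with h2 | h2 | h2 | h2
          · exact Or.inl h2
          · right; left; exact h2
          · right; right; right
            rw [sub_eq_iff_eq_add.mp h2, two_smul]
          · exact absurd h2 (fun h => three_imp γ hγ h)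

end Ctx
end ShiAux
end part3


section part4
variable {V : Type*} [NormedAddCommGroup V] [InnerProductSpace ℝ V] [FiniteDimensional ℝ V]

namespace ShiAux

def ShiCond (Pos : Set V) (kk : V → ℤ) : Prop :=
  ∀ α ∈ Pos, ∀ β ∈ Pos, α + β ∈ Pos →
    kk α + kk β ≤ kk (α + β) ∧ kk (α + β) ≤ kk α + kk β + 1

namespace Ctx

variable {Φ Pos : Set V} {f : V →ₗ[ℝ] ℝ} {θ : V} (C : Ctx Φ Pos f θ)
include C

lemma simple_refl_cases {ρ β : V} (hρs : IsSimpleRoot Pos ρ) (hβ : β ∈ Pos)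
    (hnot : reflD ρ β ∉ Pos) : β = ρ ∨ β = (2:ℝ) • ρ := by
  have hρΦ := C.posSub hρs.1
  have hβΦ := C.posSub hβ
  have hfρ := C.fpos hρs.1
  have hfβ := C.fpos hβ
  obtain ⟨c, hc⟩ := C.hΦ.crystallographic ρ hρΦ β hβΦ
  have par_case : ∀ k : ℤ, β = ((k:ℤ):ℝ) • ρ → β = ρ ∨ β = (2:ℝ) • ρ := by
    intro k hkβ
    have hk1 : 1 ≤ k := by
      have h1 : 0 < f β := hfβ
      rw [hkβ, map_smul, smul_eq_mul] at h1
      have h2 : (0:ℝ) < (k:ℝ) := by nlinarith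
      have h3 : 0 < k := by exact_mod_cast h2
      omega
    have hk2 := C.k_smul_le_two hρΦ hk1 (hkβ ▸ C.posSub hβ)
    interval_cases k
    · left; rw [hkβ]; simp
    · right; rw [hkβ]; norm_num
  have hg : reflD ρ β ∈ Φ := C.reflD_mem hρΦ hβΦ
  have hγ : (c:ℝ) • ρ - β ∈ Pos := by
    rcases C.posOrNeg hg with h | h
    · exact absurd h hnot
    · have he : -reflD ρ β = (c:ℝ) • ρ - β := by
        rw [reflD, hc]; abel
      rwa [he] at h
  have hsum : β + ((c:ℝ) • ρ - β) = (c:ℝ) • ρ := by abel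
  have hc1 : 1 ≤ c := by
    have h1 : 0 < f ((c:ℝ) • ρ) := by
      rw [← hsum, map_add]
      have := C.fpos hγ
      linarith
    rw [map_smul, smul_eq_mul] at h1
    have h2 : (0:ℝ) < (c:ℝ) := by nlinarith
    have h3 : 0 < c := by exact_mod_cast h2
    omega
  have hcn : ((c.toNat : ℕ):ℝ) = (c:ℝ) := by
    have h5 : ((c.toNat : ℤ)) = c := Int.toNat_of_nonneg (by omega)
    exact_mod_cast congrArg (Int.cast : ℤ → ℝ) h5
  rcases C.pair_lemma hρs c.toNat β ((c:ℝ) • ρ - β) hβ hγ (by rw [hcn]; exact hsum)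
    with h | h | h | h
  · exact Or.inl h
  · exact Or.inr h
  · -- c•ρ - β = ρ, so β = (c-1)•ρ
    apply par_case (c - 1)
    have h2 : β = (c:ℝ) • ρ - ρ := by rw [sub_eq_iff_eq_add.mp h]; abel
    rw [h2]; push_cast; rw [sub_smul, one_smul]
  · -- c•ρ - β = 2•ρ, so β = (c-2)•ρ
    apply par_case (c - 2)
    have h2 : β = (c:ℝ) • ρ - (2:ℝ) • ρ := by rw [sub_eq_iff_eq_add.mp h]; abel
    rw [h2]; push_cast; rw [sub_smul]

lemma posInduction (P : V → Prop) (hbase : ∀ α, IsSimpleRoot Pos α → P α)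
    (hstep : ∀ α ∈ Pos, ∀ β ∈ Pos, ∀ γ ∈ Pos, α = β + γ → P β → P γ → P α) :
    ∀ α ∈ Pos, P α := by
  have hfin : Pos.Finite := C.hΦ.finite.subset C.posSub
  suffices H : ∀ n : ℕ, ∀ α ∈ Pos, (hfin.toFinset.filter fun γ => f γ < f α).card < n → P α by
    intro α hα
    exact H _ α hα (Nat.lt_succ_self _)
  intro n
  induction n with
  | zero => intro α hα h; exact absurd h (Nat.not_lt_zero _)
  | succ n ihn =>
    intro α hα hcard
    by_cases hs : IsSimpleRoot Pos α
    · exact hbase α hs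
    · have hdec : ∃ β ∈ Pos, ∃ γ ∈ Pos, α = β + γ := by
        unfold IsSimpleRoot at hs
        push_neg at hs
        exact hs hα
      obtain ⟨β, hβ, γ, hγ, heq⟩ := hdec
      have hfβ := C.fpos hβ
      have hfγ := C.fpos hγ
      have hfeq : f α = f β + f γ := by rw [heq, map_add]
      have key : ∀ x, x ∈ Pos → f x < f α → P x := by
        intro x hx hfx
        apply ihn x hx
        have hsub : (hfin.toFinset.filter fun γ' => f γ' < f x) ⊆
            (hfin.toFinset.filter fun γ' => f γ' < f α) := by
          intro y hy
          rw [Finset.mem_filter] at hy ⊢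
          exact ⟨hy.1, lt_trans hy.2 hfx⟩
        have hss : (hfin.toFinset.filter fun γ' => f γ' < f x) ⊂
            (hfin.toFinset.filter fun γ' => f γ' < f α) := by
          refine Finset.ssubset_iff_of_subset hsub |>.mpr ?_
          refine ⟨x, ?_, ?_⟩
          · rw [Finset.mem_filter]
            exact ⟨hfin.mem_toFinset.mpr hx, hfx⟩
          · rw [Finset.mem_filter]
            rintro ⟨-, h2⟩
            exact lt_irrefl _ h2
        have := Finset.card_lt_card hss
        omega
      exact hstep α hα β hβ γ hγ heq (key β hβ (by linarith)) (key γ hγ (by linarith))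

lemma thetaInduction (P : V → Prop) (hbase : P θ)
    (hstep : ∀ α ∈ Pos, α ≠ θ → ∀ β ∈ Pos, α + β ∈ Pos → P (α + β) → P α) :
    ∀ α ∈ Pos, P α := by
  have hfin : Pos.Finite := C.hΦ.finite.subset C.posSub
  suffices H : ∀ n : ℕ, ∀ α ∈ Pos, (hfin.toFinset.filter fun γ => f α < f γ).card < n → P α by
    intro α hα
    exact H _ α hα (Nat.lt_succ_self _)
  intro n
  induction n with
  | zero => intro α hα h; exact absurd h (Nat.not_lt_zero _)
  | succ n ihn =>
    intro α hα hcard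
    by_cases hs : α = θ
    · rw [hs]; exact hbase
    · obtain ⟨β, hβ, hsum⟩ := C.chain hα hs
      have hfβ := C.fpos hβ
      have hflt : f α < f (α + β) := by rw [map_add]; linarith
      refine hstep α hα hs β hβ hsum (ihn (α + β) hsum ?_)
      have hsub : (hfin.toFinset.filter fun γ' => f (α + β) < f γ') ⊆
          (hfin.toFinset.filter fun γ' => f α < f γ') := by
        intro y hy
        rw [Finset.mem_filter] at hy ⊢
        exact ⟨hy.1, lt_trans hflt hy.2⟩
      have hss : (hfin.toFinset.filter fun γ' => f (α + β) < f γ') ⊂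
          (hfin.toFinset.filter fun γ' => f α < f γ') := by
        refine Finset.ssubset_iff_of_subset hsub |>.mpr ?_
        refine ⟨α + β, ?_, ?_⟩
        · rw [Finset.mem_filter]
          exact ⟨hfin.mem_toFinset.mpr hsum, hflt⟩
        · rw [Finset.mem_filter]
          rintro ⟨-, h2⟩
          exact lt_irrefl _ h2
      have := Finset.card_lt_card hss
      omega

lemma dominant {kk : V → ℤ} (hk : ShiCond Pos kk)
    (hs : ∀ ρ, IsSimpleRoot Pos ρ → 0 ≤ kk ρ) : ∀ α ∈ Pos, 0 ≤ kk α := by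
  apply C.posInduction (fun α => 0 ≤ kk α) (fun α hα => hs α hα)
  intro α hα β hβ γ hγ heq hβ' hγ'
  have := (hk β hβ γ hγ (heq ▸ hα)).1
  rw [← heq] at this
  omega

lemma le_theta {kk : V → ℤ} (hk : ShiCond Pos kk) (hdom : ∀ α ∈ Pos, 0 ≤ kk α) :
    ∀ α ∈ Pos, kk α ≤ kk θ := by
  apply C.thetaInduction (fun α => kk α ≤ kk θ) le_rfl
  intro α hα hne β hβ hsum hP
  have := (hk α hα β hβ hsum).1
  have := hdom β hβ
  omega

lemma pos_inner {v : V} (hv : ∀ s, IsSimpleRoot Pos s → 0 < ⟪s, v⟫) :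
    ∀ α ∈ Pos, 0 < ⟪α, v⟫ := by
  apply C.posInduction (fun α => 0 < ⟪α, v⟫) (fun α hα => hv α hα)
  intro α hα β hβ γ hγ heq hβ' hγ'
  rw [heq, inner_add_left]
  linarith

lemma lt_one {v : V} (hv : v ∈ fundamentalAlcove Pos θ) {α : V} (hα : α ∈ Pos) :
    ⟪α, v⟫ < 1 := by
  obtain ⟨k, g, hg, hsum⟩ := C.hθMax α (C.posSub hα)
  have hθeq : θ = α + ∑ i, g i := by rw [hsum]; abel
  have h1 : ⟪θ, v⟫ = ⟪α, v⟫ + ∑ i, ⟪g i, v⟫ := by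
    rw [hθeq, inner_add_left, sum_inner]
  have h2 : 0 ≤ ∑ i, ⟪g i, v⟫ :=
    Finset.sum_nonneg fun i _ => le_of_lt (C.pos_inner hv.1 (g i) (hg i))
  have h3 := hv.2
  linarith

end Ctx
end ShiAux
end part4


section part5
variable {V : Type*} [NormedAddCommGroup V] [InnerProductSpace ℝ V] [FiniteDimensional ℝ V]

namespace ShiAux

lemma rootReflection_eq {ρ : V} (hρ : ρ ≠ 0) (v : V) : rootReflection ρ v = reflD ρ v := by
  rw [rootReflection, Submodule.reflection_orthogonal_apply, Submodule.reflection_singleton_apply]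
  simp only [RCLike.ofReal_real_eq_id, id]
  have h1 : (‖ρ‖:ℝ)^2 = ⟪ρ, ρ⟫ := (real_inner_self_eq_norm_sq ρ).symm
  have h2 : ⟪ρ, v⟫ = ⟪v, ρ⟫ := real_inner_comm v ρ
  rw [h1, h2, reflD, two_smul ℕ, ← add_smul]
  have h3 : ⟪v, ρ⟫ / ⟪ρ, ρ⟫ + ⟪v, ρ⟫ / ⟪ρ, ρ⟫ = 2 * ⟪v, ρ⟫ / ⟪ρ, ρ⟫ := by ring
  rw [h3]
  abel

noncomputable def mI (t β : V) : ℤ :=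
  if h : ∃ n : ℤ, ⟪β, t⟫ = (n:ℝ) then h.choose else 0

lemma mI_spec {t β : V} (h : ∃ n : ℤ, ⟪β, t⟫ = (n:ℝ)) : ((mI t β : ℤ):ℝ) = ⟪β, t⟫ := by
  rw [mI, dif_pos h]
  exact h.choose_spec.symm

noncomputable def moveK (Pos : Set V) (ρ t : V) (kk : V → ℤ) (β : V) : ℤ :=
  (if reflD ρ β ∈ Pos then kk (reflD ρ β) else - kk (- reflD ρ β) - 1) + mI t β

namespace Ctx

variable {Φ Pos : Set V} {f : V →ₗ[ℝ] ℝ} {θ : V} (C : Ctx Φ Pos f θ)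
include C

lemma not_pos {x : V} (h : -x ∈ Pos) : x ∉ Pos := by
  have := C.neg_not_pos h
  rwa [neg_neg] at this

lemma shi_move {ρ t : V} (hρ : ρ ∈ Φ) (ht : ∀ β ∈ Pos, ∃ n : ℤ, ⟪β, t⟫ = (n:ℝ))
    {kk : V → ℤ} (hk : ShiCond Pos kk) : ShiCond Pos (moveK Pos ρ t kk) := by
  intro α hα β hβ hαβ
  have gΦ : ∀ {x : V}, x ∈ Pos → reflD ρ x ∈ Φ := fun hx => C.reflD_mem hρ (C.posSub hx)
  have hmadd : mI t (α + β) = mI t α + mI t β := by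
    have h1 := mI_spec (ht α hα)
    have h2 := mI_spec (ht β hβ)
    have h3 := mI_spec (ht _ hαβ)
    have h4 : ((mI t (α + β) : ℤ):ℝ) = ((mI t α + mI t β : ℤ):ℝ) := by
      push_cast
      rw [h3, h1, h2, inner_add_left]
    exact_mod_cast h4
  have hadd : reflD ρ (α + β) = reflD ρ α + reflD ρ β := reflD_add ρ α β
  simp only [moveK]
  rcases C.posOrNeg (gΦ hα) with hA | hA <;> rcases C.posOrNeg (gΦ hβ) with hB | hB
  · have hC : reflD ρ (α + β) ∈ Pos := by
      apply C.memPos (gΦ hαβ)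
      rw [hadd, map_add]
      exact add_pos (C.fpos hA) (C.fpos hB)
    rw [if_pos hA, if_pos hB, if_pos hC]
    obtain ⟨h1, h2⟩ := hk _ hA _ hB (by rw [← hadd]; exact hC)
    rw [← hadd] at h1 h2
    omega
  · have hnB : reflD ρ β ∉ Pos := C.not_pos hB
    rcases C.posOrNeg (gΦ hαβ) with hC | hC
    · rw [if_pos hA, if_neg hnB, if_pos hC]
      have hrel : reflD ρ (α + β) + -reflD ρ β = reflD ρ α := by rw [hadd]; abel
      obtain ⟨h1, h2⟩ := hk _ hC _ hB (by rw [hrel]; exact hA)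
      rw [hrel] at h1 h2
      omega
    · have hnC : reflD ρ (α + β) ∉ Pos := C.not_pos hC
      rw [if_pos hA, if_neg hnB, if_neg hnC]
      have hrel : reflD ρ α + -reflD ρ (α + β) = -reflD ρ β := by rw [hadd]; abel
      obtain ⟨h1, h2⟩ := hk _ hA _ hC (by rw [hrel]; exact hB)
      rw [hrel] at h1 h2
      omega
  · have hnA : reflD ρ α ∉ Pos := C.not_pos hA
    rcases C.posOrNeg (gΦ hαβ) with hC | hC
    · rw [if_neg hnA, if_pos hB, if_pos hC]
      have hrel : reflD ρ (α + β) + -reflD ρ α = reflD ρ β := by rw [hadd]; abel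
      obtain ⟨h1, h2⟩ := hk _ hC _ hA (by rw [hrel]; exact hB)
      rw [hrel] at h1 h2
      omega
    · have hnC : reflD ρ (α + β) ∉ Pos := C.not_pos hC
      rw [if_neg hnA, if_pos hB, if_neg hnC]
      have hrel : reflD ρ β + -reflD ρ (α + β) = -reflD ρ α := by rw [hadd]; abel
      obtain ⟨h1, h2⟩ := hk _ hB _ hC (by rw [hrel]; exact hA)
      rw [hrel] at h1 h2
      omega
  · have hnA : reflD ρ α ∉ Pos := C.not_pos hA
    have hnB : reflD ρ β ∉ Pos := C.not_pos hB
    have hC : -reflD ρ (α + β) ∈ Pos := by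
      apply C.memPos (C.neg_mem (gΦ hαβ))
      rw [show -reflD ρ (α + β) = -reflD ρ α + -reflD ρ β by rw [hadd]; abel, map_add]
      exact add_pos (C.fpos hA) (C.fpos hB)
    have hnC : reflD ρ (α + β) ∉ Pos := C.not_pos hC
    rw [if_neg hnA, if_neg hnB, if_neg hnC]
    have hrel : -reflD ρ α + -reflD ρ β = -reflD ρ (α + β) := by rw [hadd]; abel
    obtain ⟨h1, h2⟩ := hk _ hA _ hB (by rw [hrel]; exact hC)
    rw [hrel] at h1 h2
    omega

lemma alcove_move {ρ t : V} (hρ : ρ ∈ Pos) (ht : ∀ β ∈ Φ, ∃ n : ℤ, ⟪β, t⟫ = (n:ℝ))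
    (htρ : reflD ρ t = -t) {kk : V → ℤ} {w' : V ≃ᵃ[ℝ] V}
    (hw' : IsAlcoveK Pos θ w' (moveK Pos ρ t kk)) :
    IsAlcoveK Pos θ (AffineEquiv.constVAdd ℝ V t * rootReflectionAff ρ * w') kk := by
  have hρ0 : ρ ≠ 0 := C.ne_zero (C.posSub hρ)
  intro α hα v hv
  have happ : (AffineEquiv.constVAdd ℝ V t * rootReflectionAff ρ * w') v
      = reflD ρ (w' v) + t := by
    show AffineEquiv.constVAdd ℝ V t (rootReflectionAff ρ (w' v)) = _
    have h2 : rootReflectionAff ρ (w' v) = reflD ρ (w' v) := rootReflection_eq hρ0 _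
    rw [AffineEquiv.constVAdd_apply, h2, vadd_eq_add, add_comm]
  rw [happ]
  have key : ⟪α, reflD ρ (w' v) + t⟫ = ⟪reflD ρ α, w' v⟫ + ⟪α, t⟫ := by
    rw [inner_add_right, inner_reflD]
  set a := reflD ρ α with ha
  have haΦ : a ∈ Φ := C.reflD_mem (C.posSub hρ) (C.posSub hα)
  have hmα := mI_spec (ht α (C.posSub hα))
  have hiat : ⟪a, t⟫ = -⟪α, t⟫ := by
    rw [ha, inner_reflD, htρ, inner_neg_right]
  rcases C.posOrNeg haΦ with hA | hA
  · have h1 := hw' a hA v hv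
    have hg2 : reflD ρ a = α := reflD_reflD hρ0 α
    rw [moveK, hg2, if_pos hα] at h1
    have hma : (mI t a : ℝ) = ⟪a, t⟫ := mI_spec (ht a haΦ)
    obtain ⟨h2, h3⟩ := h1
    push_cast at h2 h3
    rw [key]
    constructor
    · push_cast
      linarith [hma, hiat, hmα, h2]
    · push_cast
      linarith [hma, hiat, hmα, h3]
  · have h1 := hw' (-a) hA v hv
    have hg2 : reflD ρ (-a) = -α := by rw [reflD_neg, reflD_reflD hρ0]
    have hnα : -α ∉ Pos := C.neg_not_pos hα
    rw [moveK, hg2, if_neg hnα, neg_neg] at h1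
    have hma : (mI t (-a) : ℝ) = ⟪α, t⟫ := by
      rw [mI_spec (ht (-a) (C.neg_mem haΦ)), inner_neg_left, hiat, neg_neg]
    have hin : ⟪(-a), w' v⟫ = -⟪a, w' v⟫ := by rw [inner_neg_left]
    obtain ⟨h2, h3⟩ := h1
    rw [hin] at h2 h3
    push_cast at h2 h3
    rw [key]
    constructor
    · push_cast
      linarith [hma, hmα, h3]
    · push_cast
      linarith [hma, hmα, h2]

lemma alcove_one : IsAlcoveK Pos θ (1 : V ≃ᵃ[ℝ] V) (fun _ => 0) := by
  intro α hα v hv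
  have h0 : (1 : V ≃ᵃ[ℝ] V) v = v := rfl
  constructor
  · rw [h0]
    simpa using C.pos_inner hv.1 α hα
  · rw [h0]
    simpa using C.lt_one hv hα

end Ctx

lemma move_mem {Φ : Set V} {ρ t : V} (hρ : ρ ∈ Φ) (htL : t ∈ corootLattice Φ)
    {w' : V ≃ᵃ[ℝ] V} (hw' : w' ∈ affineWeylGroup Φ) :
    AffineEquiv.constVAdd ℝ V t * rootReflectionAff ρ * w' ∈ affineWeylGroup Φ :=
  mul_mem (mul_mem (Subgroup.subset_closure (Or.inr ⟨t, htL, rfl⟩))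
    (Subgroup.subset_closure (Or.inl ⟨ρ, hρ, rfl⟩))) hw'

end ShiAux
end part5


section part6
variable {V : Type*} [NormedAddCommGroup V] [InnerProductSpace ℝ V] [FiniteDimensional ℝ V]

namespace ShiAux
namespace Ctx

variable {Φ Pos : Set V} {f : V →ₗ[ℝ] ℝ} {θ : V} (C : Ctx Φ Pos f θ)
include C

lemma mI_zero : ∀ β : V, mI (0:V) β = 0 := by
  intro β
  have h := mI_spec (t := (0:V)) (β := β) ⟨0, by simp⟩
  have h2 : ((mI (0:V) β : ℤ):ℝ) = ((0:ℤ):ℝ) := by rw [h]; simp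
  exact_mod_cast h2

lemma decrease_simple {ρ : V} (hρs : IsSimpleRoot Pos ρ) {kk : V → ℤ} (hk : ShiCond Pos kk)
    (hkρ : kk ρ < 0) {PF : Finset V} (hPF : ∀ x, x ∈ PF ↔ x ∈ Pos) :
    ∑ β ∈ PF, (moveK Pos ρ (0:V) kk β).natAbs < ∑ β ∈ PF, (kk β).natAbs := by
  have hρ0 : ρ ≠ 0 := C.ne_zero' hρs.1
  have hm0 := C.mI_zero
  rw [← Finset.sum_filter_add_sum_filter_not PF (fun β => reflD ρ β ∈ Pos)
      (fun β => (moveK Pos ρ (0:V) kk β).natAbs),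
    ← Finset.sum_filter_add_sum_filter_not PF (fun β => reflD ρ β ∈ Pos)
      (fun β => (kk β).natAbs)]
  apply add_lt_add_of_le_of_lt
  · apply le_of_eq
    apply Finset.sum_nbij' (fun β => reflD ρ β) (fun β => reflD ρ β)
    · intro a ha
      rw [Finset.mem_filter] at ha ⊢
      refine ⟨(hPF _).mpr ha.2, ?_⟩
      rw [reflD_reflD hρ0]
      exact (hPF _).mp ha.1
    · intro a ha
      rw [Finset.mem_filter] at ha ⊢
      refine ⟨(hPF _).mpr ha.2, ?_⟩
      rw [reflD_reflD hρ0]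
      exact (hPF _).mp ha.1
    · intro a _; rw [reflD_reflD hρ0]
    · intro a _; rw [reflD_reflD hρ0]
    · intro a ha
      rw [Finset.mem_filter] at ha
      rw [moveK, if_pos ha.2, hm0, add_zero]
  · apply Finset.sum_lt_sum_of_nonempty
    · refine ⟨ρ, ?_⟩
      rw [Finset.mem_filter]
      refine ⟨(hPF ρ).mpr hρs.1, ?_⟩
      rw [reflD_self hρ0]
      exact C.neg_not_pos hρs.1
    · intro β hb
      rw [Finset.mem_filter] at hb
      obtain ⟨hbPF, hbnot⟩ := hb
      have hβPos := (hPF β).mp hbPF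
      rcases C.simple_refl_cases hρs hβPos hbnot with h | h
      · subst h
        rw [moveK, if_neg hbnot, hm0, add_zero, reflD_self hρ0, neg_neg]
        omega
      · have h2 : reflD ρ β = -β := by rw [h]; exact reflD_two_self hρ0
        have h5 : β = ρ + ρ := by rw [h, two_smul]
        have hk2 : kk β ≤ -1 := by
          have h2ρ : ρ + ρ ∈ Pos := h5 ▸ hβPos
          obtain ⟨h3, h4⟩ := hk ρ hρs.1 ρ hρs.1 h2ρ
          rw [← h5] at h4
          omega
        rw [moveK, if_neg hbnot, hm0, add_zero, h2, neg_neg]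
        omega

lemma decrease_theta {kk : V → ℤ} (hk : ShiCond Pos kk) (hdom : ∀ α ∈ Pos, 0 ≤ kk α)
    (hθ1 : 1 ≤ kk θ) {PF : Finset V} (hPF : ∀ x, x ∈ PF ↔ x ∈ Pos) :
    ∑ β ∈ PF, (moveK Pos θ (coroot θ) kk β).natAbs < ∑ β ∈ PF, (kk β).natAbs := by
  have hθΦ := C.posSub C.hθPos
  have hθ0 : θ ≠ 0 := C.ne_zero hθΦ
  have hθθ := C.ipos hθΦ
  have hco : ∀ β : V, ⟪β, coroot θ⟫ = 2 * ⟪β, θ⟫ / ⟪θ, θ⟫ := by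
    intro β
    rw [coroot, real_inner_smul_right]
    ring
  have hcoθ : ⟪θ, coroot θ⟫ = 2 := by rw [hco]; field_simp
  have hmIβ : ∀ (β : V) (c : ℤ), 2 * ⟪β, θ⟫ / ⟪θ, θ⟫ = (c:ℝ) → mI (coroot θ) β = c := by
    intro β c hc
    have h := mI_spec (t := coroot θ) (β := β) ⟨c, by rw [hco]; exact hc⟩
    rw [hco, hc] at h
    exact_mod_cast h
  have hθPF : θ ∈ PF := (hPF θ).mpr C.hθPos
  rw [← Finset.sum_erase_add PF _ hθPF,
    ← Finset.sum_erase_add PF (fun β => (kk β).natAbs) hθPF]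
  have hcls : ∀ β ∈ PF.erase θ,
      (reflD θ β ∈ Pos → moveK Pos θ (coroot θ) kk β = kk β) ∧
      (reflD θ β ∉ Pos → (θ - β ∈ PF.erase θ ∧ reflD θ (θ - β) ∉ Pos ∧
        moveK Pos θ (coroot θ) kk β = - kk (θ - β))) := by
    intro β hb
    rw [Finset.mem_erase] at hb
    obtain ⟨hne, hbPF⟩ := hb
    have hβPos := (hPF β).mp hbPF
    obtain ⟨c, hc, hc01⟩ := C.theta_coeff hβPos hne
    have hmI := hmIβ β c hc
    constructor
    · intro hP
      have hc0 : c = 0 := by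
        rcases hc01 with h | h
        · exact h
        · exfalso
          subst h
          have hg : reflD θ β = β - θ := by
            rw [reflD, hc]
            push_cast
            rw [one_smul]
          rw [hg] at hP
          have h6 := C.fpos hP
          rw [map_sub] at h6
          linarith [C.f_lt_theta hβPos hne]
      subst hc0
      have hg : reflD θ β = β := by
        rw [reflD, hc]
        push_cast
        rw [zero_smul, sub_zero]
      rw [moveK, hg, if_pos hβPos, hmI, add_zero]
    · intro hP
      have hc1 : c = 1 := by
        rcases hc01 with h | h
        · exfalso
          subst h
          have hg : reflD θ β = β := by
            rw [reflD, hc]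
            push_cast
            rw [zero_smul, sub_zero]
          rw [hg] at hP
          exact hP hβPos
        · exact h
      subst hc1
      have hc' : 2 * ⟪β, θ⟫ / ⟪θ, θ⟫ = (1:ℝ) := by rw [hc]; norm_num
      have hg : reflD θ β = β - θ := by
        rw [reflD, hc']
        rw [one_smul]
      have hθβ : θ - β ∈ Pos := C.theta_sub hβPos hne hc'
      have hne2 : θ - β ≠ θ := by
        intro e
        exact C.ne_zero' hβPos (sub_eq_self.mp e)
      have he1 : 2 * ⟪β, θ⟫ = ⟪θ, θ⟫ := by
        rw [div_eq_iff (ne_of_gt hθθ)] at hc'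
        linarith
      have hcsub : 2 * ⟪θ - β, θ⟫ / ⟪θ, θ⟫ = (1:ℝ) := by
        rw [inner_sub_left, div_eq_iff (ne_of_gt hθθ)]
        linarith
      have hg2 : reflD θ (θ - β) = -β := by
        rw [reflD, hcsub, one_smul]
        abel
      have hmI2 : mI (coroot θ) β = 1 := by exact_mod_cast hmI
      refine ⟨?_, ?_, ?_⟩
      · rw [Finset.mem_erase]
        exact ⟨hne2, (hPF _).mpr hθβ⟩
      · rw [hg2]
        exact C.neg_not_pos hβPos
      · rw [moveK, if_neg hP, hmI2, hg, neg_sub]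
        omega
  apply add_lt_add_of_le_of_lt
  · apply le_of_eq
    rw [← Finset.sum_filter_add_sum_filter_not (PF.erase θ) (fun β => reflD θ β ∈ Pos)
        (fun β => (moveK Pos θ (coroot θ) kk β).natAbs),
      ← Finset.sum_filter_add_sum_filter_not (PF.erase θ) (fun β => reflD θ β ∈ Pos)
        (fun β => (kk β).natAbs)]
    congr 1
    · apply Finset.sum_congr rfl
      intro β hb
      rw [Finset.mem_filter] at hb
      rw [(hcls β hb.1).1 hb.2]
    · apply Finset.sum_nbij' (fun β => θ - β) (fun β => θ - β)
      · intro a ha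
        rw [Finset.mem_filter] at ha ⊢
        obtain ⟨h1, h2, h3⟩ := (hcls a ha.1).2 ha.2
        exact ⟨h1, h2⟩
      · intro a ha
        rw [Finset.mem_filter] at ha ⊢
        obtain ⟨h1, h2, h3⟩ := (hcls a ha.1).2 ha.2
        exact ⟨h1, h2⟩
      · intro a _; abel
      · intro a _; abel
      · intro a ha
        rw [Finset.mem_filter] at ha
        rw [(hcls a ha.1).2 ha.2 |>.2.2, Int.natAbs_neg]
  · have hgθ : reflD θ θ = -θ := reflD_self hθ0
    have hnθ : reflD θ θ ∉ Pos := by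
      rw [hgθ]
      exact C.neg_not_pos C.hθPos
    have hmIθ : mI (coroot θ) θ = 2 := hmIβ θ 2 (by rw [div_eq_iff (ne_of_gt hθθ)]; push_cast; ring)
    rw [moveK, if_neg hnθ, hmIθ, hgθ, neg_neg]
    omega

end Ctx
end ShiAux
end part6


section part7
variable {V : Type*} [NormedAddCommGroup V] [InnerProductSpace ℝ V] [FiniteDimensional ℝ V]

namespace ShiAux
namespace Ctx

variable {Φ Pos : Set V} {f : V →ₗ[ℝ] ℝ} {θ : V} (C : Ctx Φ Pos f θ)
include C

lemma exists_w {PF : Finset V} (hPF : ∀ x : V, x ∈ PF ↔ x ∈ Pos) :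
    ∀ N : ℕ, ∀ kk : V → ℤ, ShiCond Pos kk → (∑ β ∈ PF, (kk β).natAbs) = N →
      ∃ w ∈ affineWeylGroup Φ, IsAlcoveK Pos θ w kk := by
  intro N
  induction N using Nat.strong_induction_on with
  | _ N ih =>
    intro kk hk hsum
    by_cases hneg : ∃ ρ, IsSimpleRoot Pos ρ ∧ kk ρ < 0
    · obtain ⟨ρ, hρs, hρneg⟩ := hneg
      have ht0 : ∀ β ∈ Pos, ∃ n : ℤ, ⟪β, (0:V)⟫ = (n:ℝ) := fun β _ => ⟨0, by simp⟩
      have hk' := C.shi_move (C.posSub hρs.1) ht0 hk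
      have hdec := C.decrease_simple hρs hk hρneg hPF
      rw [hsum] at hdec
      obtain ⟨w', hw'mem, hw'alc⟩ := ih _ hdec (moveK Pos ρ 0 kk) hk' rfl
      refine ⟨_, move_mem (C.posSub hρs.1) (AddSubgroup.zero_mem _) hw'mem, ?_⟩
      exact C.alcove_move hρs.1 (fun β _ => ⟨0, by simp⟩)
        (by rw [reflD_zero, neg_zero]) hw'alc
    · push_neg at hneg
      rcases Nat.eq_zero_or_pos N with hN | hN
      · have hz : ∀ β ∈ Pos, kk β = 0 := by
          intro β hβ
          have h1 : ∑ β ∈ PF, (kk β).natAbs = 0 := by rw [hsum, hN]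
          have h2 := Finset.sum_eq_zero_iff.mp h1 β ((hPF β).mpr hβ)
          omega
        refine ⟨1, one_mem _, ?_⟩
        intro α hα v hv
        have h3 := C.alcove_one α hα v hv
        rw [hz α hα]
        simpa using h3
      · have hdom := C.dominant hk hneg
        have hex : ∃ β ∈ PF, kk β ≠ 0 := by
          by_contra hcon
          push_neg at hcon
          have h4 : ∑ β ∈ PF, (kk β).natAbs = 0 :=
            Finset.sum_eq_zero (fun β hβ => by rw [hcon β hβ]; rfl)
          omega
        obtain ⟨β, hβPF, hβne⟩ := hex
        have hβPos := (hPF β).mp hβPF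
        have hθ1 : 1 ≤ kk θ := by
          have h1 := hdom β hβPos
          have h2 := C.le_theta hk hdom β hβPos
          omega
        have hθθ := C.ipos (C.posSub C.hθPos)
        have htcΦ : ∀ γ ∈ Φ, ∃ n : ℤ, ⟪γ, coroot θ⟫ = (n:ℝ) := by
          intro γ hγ
          obtain ⟨n, hn⟩ := C.hΦ.crystallographic θ (C.posSub C.hθPos) γ hγ
          refine ⟨n, ?_⟩
          rw [coroot, real_inner_smul_right, ← hn]
          ring
        have htc : ∀ γ ∈ Pos, ∃ n : ℤ, ⟪γ, coroot θ⟫ = (n:ℝ) :=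
          fun γ hγ => htcΦ γ (C.posSub hγ)
        have hk' := C.shi_move (C.posSub C.hθPos) htc hk
        have hdec := C.decrease_theta hk hdom hθ1 hPF
        rw [hsum] at hdec
        obtain ⟨w', hw'mem, hw'alc⟩ := ih _ hdec (moveK Pos θ (coroot θ) kk) hk' rfl
        have hlat : coroot θ ∈ corootLattice Φ :=
          AddSubgroup.subset_closure ⟨θ, C.posSub C.hθPos, rfl⟩
        refine ⟨_, move_mem (C.posSub C.hθPos) hlat hw'mem, ?_⟩
        refine C.alcove_move C.hθPos htcΦ ?_ hw'alc
        rw [coroot, reflD, real_inner_smul_left]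
        have h9 : 2 * (2 / ⟪θ,θ⟫ * ⟪θ,θ⟫) / ⟪θ,θ⟫ = 2 / ⟪θ,θ⟫ + 2 / ⟪θ,θ⟫ := by
          field_simp
          ring
        rw [h9, add_smul]
        abel

lemma forward {kk : V → ℤ} {w : V ≃ᵃ[ℝ] V} (hw : IsAlcoveK Pos θ w kk) :
    ShiCond Pos kk := by
  have hfθ := C.fpos C.hθPos
  have huf : ∀ x : V,
      ⟪(InnerProductSpace.toDual ℝ V).symm (LinearMap.toContinuousLinearMap f), x⟫ = f x :=
    fun x => InnerProductSpace.toDual_symm_apply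
  set u := (InnerProductSpace.toDual ℝ V).symm (LinearMap.toContinuousLinearMap f) with hu
  set v₀ := (1 / (2 * f θ)) • u with hv₀
  have hiv : ∀ x : V, ⟪x, v₀⟫ = (1 / (2 * f θ)) * f x := by
    intro x
    rw [hv₀, real_inner_smul_right, real_inner_comm, huf]
  have hA : v₀ ∈ fundamentalAlcove Pos θ := by
    constructor
    · intro s hs
      rw [hiv]
      have h1 := C.fpos hs.1
      positivity
    · show ⟪θ, v₀⟫ < 1
      rw [hiv]
      have h2 : 1 / (2 * f θ) * f θ = 1 / 2 := by field_simp
      rw [h2]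
      norm_num
  intro α hα β hβ hαβ
  obtain ⟨h1a, h1b⟩ := hw α hα v₀ hA
  obtain ⟨h2a, h2b⟩ := hw β hβ v₀ hA
  obtain ⟨h3a, h3b⟩ := hw _ hαβ v₀ hA
  rw [inner_add_left] at h3a h3b
  constructor
  · have h5 : ((kk α + kk β : ℤ):ℝ) < ((kk (α+β) + 1 : ℤ):ℝ) := by push_cast; linarith
    have h6 : kk α + kk β < kk (α+β) + 1 := by exact_mod_cast h5
    omega
  · have h5 : ((kk (α+β) : ℤ):ℝ) < ((kk α + kk β + 2 : ℤ):ℝ) := by push_cast; linarith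
    have h6 : kk (α+β) < kk α + kk β + 2 := by exact_mod_cast h5
    omega

end Ctx
end ShiAux

end part7


end ShiAuxSec

/-- (Shi) Given integers `k_α` for `α ∈ Φ⁺`, there exists `w ∈ W_a` with
`k(α, w) = k_α` for all `α` iff `k_α + k_β ≤ k_{α+β} ≤ k_α + k_β + 1` whenever
`α, β, α + β ∈ Φ⁺`. -/
theorem shi_alcove_characterization (Φ Pos : Set V) (hΦ : IsRootSystem Φ)
    (hirr : IsIrreducibleRootSystem Φ) (hPos : IsPositiveSystem Φ Pos)
    (θ : V) (hθ : θ ∈ Pos ∧ ∀ α ∈ Φ, RootLE Pos α θ)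
    (kk : V → ℤ) :
    (∃ w ∈ affineWeylGroup Φ, IsAlcoveK Pos θ w kk) ↔
      ∀ α ∈ Pos, ∀ β ∈ Pos, α + β ∈ Pos →
        kk α + kk β ≤ kk (α + β) ∧ kk (α + β) ≤ kk α + kk β + 1 := by
  obtain ⟨f, hf, hPosEq⟩ := hPos
  have C : ShiAux.Ctx Φ Pos f θ := ⟨hΦ, hf, hPosEq, hθ.1, hθ.2⟩
  constructor
  · rintro ⟨w, hwmem, hw⟩
    exact C.forward hw
  · intro hk
    have hfin : Pos.Finite := hΦ.finite.subset C.posSub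
    exact C.exists_w (fun x => hfin.mem_toFinset) _ kk hk rfl
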